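/- Let 𝔉 and 𝔥 be clonable families of r-graphs. If 𝔉 is 𝔥-locally stable, then 𝔉 is 𝔥-weight locally stable. -/

import Mathlib

open Filter

namespace TuranGT

/-- An `r`-graph: an `r`-uniform hypergraph with vertex set `{0, ..., n-1} ⊆ ℕ`. -/
structure RGraph (r : ℕ) where
  n : ℕ
  edges : Finset (Finset ℕ)
  uniform : ∀ e ∈ edges, e.card = r
  valid : ∀ e ∈ edges, ∀ v ∈ e, v < n

variable {r : ℕ}

/-- The link of a vertex `v`: the set of `(r-1)`-sets `I` with `I ∪ {v}` an edge. -/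
def link (F : RGraph r) (v : ℕ) : Finset (Finset ℕ) :=
  (F.edges.filter fun e => v ∈ e).image fun e => e.erase v

/-- `G` contains a copy of `H` as a subgraph. -/
def ContainsCopy (G H : RGraph r) : Prop :=
  ∃ f : ℕ → ℕ, Set.InjOn f (Set.Iio H.n) ∧ (∀ v < H.n, f v < G.n) ∧
    ∀ e ∈ H.edges, e.image f ∈ G.edges

/-- `G` is `𝔉`-free: it contains no member of `𝔉` as a subgraph. -/
def FreeFam (𝔉 : Set (RGraph r)) (G : RGraph r) : Prop :=
  ∀ H ∈ 𝔉, ¬ ContainsCopy G H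

/-- The Turán number `ex(n, 𝔉)`. -/
noncomputable def exNum (r n : ℕ) (𝔉 : Set (RGraph r)) : ℕ :=
  sSup {k | ∃ G : RGraph r, G.n = n ∧ FreeFam 𝔉 G ∧ G.edges.card = k}

/-- `φ` witnesses that `G` is a blowup of `F`: fibers of `φ` form a blowup partition. -/
def IsBlowupMap (F G : RGraph r) (φ : ℕ → ℕ) : Prop :=
  (∀ v < G.n, φ v < F.n) ∧
    ∀ e : Finset ℕ, e ∈ G.edges ↔
      ((∀ v ∈ e, v < G.n) ∧ Set.InjOn φ (e : Set ℕ) ∧ e.image φ ∈ F.edges)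

/-- `G` is (isomorphic to) a blowup of `F` (cloning and deleting vertices). -/
def IsBlowup (F G : RGraph r) : Prop := ∃ φ : ℕ → ℕ, IsBlowupMap F G φ

/-- The family `𝔅(S)` of all blowups of `S`. -/
def blowupFam (S : RGraph r) : Set (RGraph r) := {G | IsBlowup S G}

/-- A family is clonable if it is closed under taking blowups. -/
def Clonable (𝔉 : Set (RGraph r)) : Prop :=
  ∀ F ∈ 𝔉, ∀ G : RGraph r, IsBlowup F G → G ∈ 𝔉

/-- `m(𝔉, n)`: maximum number of edges of an `n`-vertex member of `𝔉`. -/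
noncomputable def mFam (𝔉 : Set (RGraph r)) (n : ℕ) : ℕ :=
  sSup {k | ∃ F ∈ 𝔉, F.n = n ∧ F.edges.card = k}

/-- `m(𝔉) = lim_{n → ∞} m(𝔉, n)/n^r` (when the family is smooth). -/
noncomputable def mDen (𝔉 : Set (RGraph r)) : ℝ :=
  limUnder atTop fun n : ℕ => (mFam 𝔉 n : ℝ) / (n : ℝ) ^ r

/-- The edit distance `d_𝔥(F)` from `F` to the family `𝔥`. -/
noncomputable def distFam (𝔥 : Set (RGraph r)) (F : RGraph r) : ℝ :=
  sInf {x : ℝ | ∃ H ∈ 𝔥, H.n = F.n ∧ x = ((symmDiff F.edges H.edges).card : ℝ)}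

/-- `μ` is a probability distribution on the vertex set of `F`. -/
def IsWeight (F : RGraph r) (μ : ℕ → ℝ) : Prop :=
  (∀ v, 0 ≤ μ v) ∧ (∀ v, F.n ≤ v → μ v = 0) ∧ ∑ v ∈ Finset.range F.n, μ v = 1

/-- Weighted density `λ(F, μ)`. -/
noncomputable def lamW (F : RGraph r) (μ : ℕ → ℝ) : ℝ :=
  ∑ e ∈ F.edges, ∏ v ∈ e, μ v

/-- The Lagrangian `λ(F)`. -/
noncomputable def lagrangian (F : RGraph r) : ℝ :=
  sSup {x : ℝ | ∃ μ, IsWeight F μ ∧ x = lamW F μ}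

/-- `λ(𝔥)` for a family of r-graphs. -/
noncomputable def lamFam (𝔥 : Set (RGraph r)) : ℝ :=
  sSup {x : ℝ | ∃ H ∈ 𝔥, ∃ μ, IsWeight H μ ∧ x = lamW H μ}

/-- The uniform distribution `ξ_F`. -/
noncomputable def uniformW (F : RGraph r) : ℕ → ℝ :=
  fun v => if v < F.n then ((F.n : ℝ))⁻¹ else 0

/-- `(G, ν)` is a blowup of the weighted graph `(F, μ)`. -/
def WIsBlowup (F : RGraph r) (μ : ℕ → ℝ) (G : RGraph r) (ν : ℕ → ℝ) : Prop :=
  IsWeight G ν ∧ ∃ φ : ℕ → ℕ, IsBlowupMap F G φ ∧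
    ∀ i < F.n, μ i = ∑ v ∈ (Finset.range G.n).filter (fun v => φ v = i), ν v

/-- `d'(F1, F2, μ)` for graphs on a common vertex set. -/
noncomputable def dPrime (E1 E2 : Finset (Finset ℕ)) (μ : ℕ → ℝ) : ℝ :=
  ∑ e ∈ symmDiff E1 E2, ∏ v ∈ e, μ v

/-- The distance between weighted `r`-graphs. -/
noncomputable def wDist (F1 : RGraph r) (μ1 : ℕ → ℝ) (F2 : RGraph r) (μ2 : ℕ → ℝ) : ℝ :=
  sInf {x : ℝ | ∃ (G1 G2 : RGraph r) (ν : ℕ → ℝ), G1.n = G2.n ∧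
    WIsBlowup F1 μ1 G1 ν ∧ WIsBlowup F2 μ2 G2 ν ∧ x = dPrime G1.edges G2.edges ν}

/-- The weighted distance `d^w_𝔥(F, μ)` from a weighted graph to a family. -/
noncomputable def wDistFam (𝔥 : Set (RGraph r)) (F : RGraph r) (μ : ℕ → ℝ) : ℝ :=
  sInf {x : ℝ | ∃ H ∈ 𝔥, ∃ ν, IsWeight H ν ∧ x = wDist F μ H ν}

/-- `𝔉` is `(𝔥, ε, α)`-locally stable. -/
def LocallyStable (𝔉 𝔥 : Set (RGraph r)) (ε α : ℝ) : Prop :=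
  ∃ n0 : ℕ, ∀ F ∈ 𝔉, n0 ≤ F.n → distFam 𝔥 F ≤ ε * (F.n : ℝ) ^ r →
    (F.edges.card : ℝ) ≤ (mFam 𝔥 F.n : ℝ) - α * distFam 𝔥 F

/-- `𝔉` is `𝔥`-locally stable. -/
def HLocallyStable (𝔉 𝔥 : Set (RGraph r)) : Prop :=
  ∃ ε > (0 : ℝ), ∃ α > (0 : ℝ), LocallyStable 𝔉 𝔥 ε α

/-- `𝔉` is `𝔥`-stable, i.e. `(𝔥, 1, α)`-locally stable for some `α > 0`. -/
def HStable (𝔉 𝔥 : Set (RGraph r)) : Prop :=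
  ∃ α > (0 : ℝ), LocallyStable 𝔉 𝔥 1 α

/-- `𝔉` is `(𝔥, ε, α)`-vertex locally stable. -/
def VertexLocallyStable (𝔉 𝔥 : Set (RGraph r)) (ε α : ℝ) : Prop :=
  ∃ n0 : ℕ, ∀ F ∈ 𝔉, n0 ≤ F.n → distFam 𝔥 F ≤ ε * (F.n : ℝ) ^ r →
    (∀ v < F.n, ((r : ℝ) * mDen 𝔥 - ε) * (F.n : ℝ) ^ (r - 1) ≤ ((link F v).card : ℝ)) →
    (F.edges.card : ℝ) ≤ (mFam 𝔥 F.n : ℝ) - α * distFam 𝔥 F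

/-- `𝔉` is `𝔥`-vertex locally stable. -/
def HVertexLocallyStable (𝔉 𝔥 : Set (RGraph r)) : Prop :=
  ∃ ε > (0 : ℝ), ∃ α > (0 : ℝ), VertexLocallyStable 𝔉 𝔥 ε α

/-- `𝔉` is `(𝔥, ε, α)`-weight locally stable. -/
def WeightLocallyStable (𝔉 𝔥 : Set (RGraph r)) (ε α : ℝ) : Prop :=
  ∀ F ∈ 𝔉, ∀ μ : ℕ → ℝ, IsWeight F μ → wDistFam 𝔥 F μ ≤ ε →
    lamW F μ ≤ lamFam 𝔥 - α * wDistFam 𝔥 F μ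

/-- `𝔉` is `𝔥`-weight locally stable. -/
def HWeightLocallyStable (𝔉 𝔥 : Set (RGraph r)) : Prop :=
  ∃ ε > (0 : ℝ), ∃ α > (0 : ℝ), WeightLocallyStable 𝔉 𝔥 ε α

/-- `𝔉` is `𝔥`-weight stable: `(𝔥, 1, α)`-weight locally stable for some `α > 0`. -/
def HWeightStable (𝔉 𝔥 : Set (RGraph r)) : Prop :=
  ∃ α > (0 : ℝ), WeightLocallyStable 𝔉 𝔥 1 α

/-- `𝔉` is `𝔥`-weakly weight stable. -/
def WeaklyWeightStable (𝔉 𝔥 : Set (RGraph r)) : Prop :=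
  ∀ ε > (0 : ℝ), ∃ δ > (0 : ℝ), ∀ F ∈ 𝔉, ∀ μ : ℕ → ℝ, IsWeight F μ →
    lamFam 𝔥 - δ ≤ lamW F μ → wDistFam 𝔥 F μ ≤ ε

/-- The generalized triangle `T_r` on vertex set `{0, ..., 2r-2}` (for `r ≥ 2`),
with edges `D1 = {0,...,r-1}`, `D2 = {0,...,r-2} ∪ {r}`, `D3 = {r-1, r, ..., 2r-2}`. -/
def genTriangle (r : ℕ) : RGraph r where
  n := 2 * r - 1
  edges :=
    if _h : 2 ≤ r then
      {Finset.range r, insert r (Finset.range (r - 1)), Finset.Ico (r - 1) (2 * r - 1)}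
    else ∅
  uniform := by
    intro e he
    split_ifs at he with h
    · simp only [Finset.mem_insert, Finset.mem_singleton] at he
      rcases he with rfl | rfl | rfl
      · exact Finset.card_range r
      · rw [Finset.card_insert_of_notMem (by simp only [Finset.mem_range]; omega),
          Finset.card_range]
        omega
      · rw [Nat.card_Ico]
        omega
    · simp at he
  valid := by
    intro e he v hv
    split_ifs at he with h
    · simp only [Finset.mem_insert, Finset.mem_singleton] at he
      rcases he with rfl | rfl | rfl
      · simp only [Finset.mem_range] at hv; omega
      · simp only [Finset.mem_insert, Finset.mem_range] at hv; omega
      · simp only [Finset.mem_Ico] at hv; omega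
    · simp at he

/-- The family `Σ_r`: all `r`-graphs with three edges `D1, D2, D3` such that
`|D1 ∩ D2| = r - 1` and `D1 △ D2 ⊆ D3`. -/
def SigmaFam (r : ℕ) : Set (RGraph r) :=
  {G | ∃ D1 D2 D3 : Finset ℕ, G.edges = {D1, D2, D3} ∧
    D1 ≠ D2 ∧ D1 ≠ D3 ∧ D2 ≠ D3 ∧
    (D1 ∩ D2).card = r - 1 ∧ symmDiff D1 D2 ⊆ D3}

/-- The complete graph `K_t` as a `2`-graph. -/
def completeGraph (t : ℕ) : RGraph 2 where
  n := t
  edges := Finset.powersetCard 2 (Finset.range t)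
  uniform := fun _e he => (Finset.mem_powersetCard.1 he).2
  valid := fun _e he v hv => Finset.mem_range.1 ((Finset.mem_powersetCard.1 he).1 hv)

/-- `S` is an `(m, r, r-1)` Steiner system: each `(r-1)`-subset of the vertex set
lies in exactly one edge. -/
def IsSteiner (m : ℕ) (S : RGraph r) : Prop :=
  S.n = m ∧ ∀ I : Finset ℕ, (∀ v ∈ I, v < S.n) → I.card = r - 1 →
    ∃! e, e ∈ S.edges ∧ I ⊆ e

/-- `F` covers pairs: every two vertices lie in a common edge. -/
def CoversPairs (F : RGraph r) : Prop :=
  ∀ u < F.n, ∀ v < F.n, ∃ e ∈ F.edges, u ∈ e ∧ v ∈ e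

/-- Isomorphism of `r`-graphs. -/
def Isomorphic (F G : RGraph r) : Prop :=
  F.n = G.n ∧ ∃ f : ℕ → ℕ, Set.InjOn f (Set.Iio F.n) ∧ (∀ v < F.n, f v < G.n) ∧
    ∀ e : Finset ℕ, e ∈ F.edges ↔ ((∀ v ∈ e, v < F.n) ∧ e.image f ∈ G.edges)

/-- The support of a weighting. -/
noncomputable def suppW (F : RGraph r) (μ : ℕ → ℝ) : Finset ℕ :=
  (Finset.range F.n).filter fun v => μ v ≠ 0

/-- `G` is isomorphic to the subgraph of `F` induced on the vertex set `S`. -/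
def IsIsoInduced (F : RGraph r) (S : Finset ℕ) (G : RGraph r) : Prop :=
  ∃ f : ℕ → ℕ, Set.InjOn f (Set.Iio G.n) ∧ (Finset.range G.n).image f = S ∧
    ∀ e : Finset ℕ, e ∈ G.edges ↔ ((∀ v ∈ e, v < G.n) ∧ e.image f ∈ F.edges)

/-- An `r`-graph is thin if every `(r-1)`-set lies in at most one edge. -/
def ThinG (F : RGraph r) : Prop :=
  ∀ I : Finset ℕ, I.card = r - 1 → ∀ e1 ∈ F.edges, ∀ e2 ∈ F.edges,
    I ⊆ e1 → I ⊆ e2 → e1 = e2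

/-- A Steiner system (or any graph) is balanced if its Lagrangian is attained by
the uniform distribution. -/
def Balanced (F : RGraph r) : Prop := lagrangian F = lamW F (uniformW F)

/-- `e(m, r) = C(m, r-1) / (r m^r)`. -/
noncomputable def eDen (m r : ℕ) : ℝ :=
  (m.choose (r - 1) : ℝ) / ((r : ℝ) * (m : ℝ) ^ r)

/-- `d(m, r) = C(m-1, r-2) / ((r-1) m^{r-1})`. -/
noncomputable def dDen (m r : ℕ) : ℝ :=
  ((m - 1).choose (r - 2) : ℝ) / (((r : ℝ) - 1) * (m : ℝ) ^ (r - 1))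

/-- `S` is uniquely dense around `Σ_r`: the uniform weighting of `S` strictly maximizes the
weighted density among weighted `Σ_r`-free `r`-graphs covering pairs. -/
def UniquelyDense (S : RGraph r) : Prop :=
  (∀ F : RGraph r, FreeFam (SigmaFam r) F → CoversPairs F → ∀ μ : ℕ → ℝ, IsWeight F μ →
    lamW F μ ≤ lamW S (uniformW S)) ∧
  ∀ F : RGraph r, FreeFam (SigmaFam r) F → CoversPairs F → ∀ μ : ℕ → ℝ, IsWeight F μ →
    lamW F μ = lamW S (uniformW S) → Isomorphic F S ∧ μ = uniformW F

section Aux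

open Finset

variable {r : ℕ}

/-- The canonical blowup of `F` along a map `φ` with `n` vertices. -/
noncomputable def blow (F : RGraph r) (n : ℕ) (φ : ℕ → ℕ) : RGraph r where
  n := n
  edges := (Finset.range n).powerset.filter
    (fun e => (e.image φ).card = e.card ∧ e.image φ ∈ F.edges)
  uniform := by
    intro e he
    simp only [Finset.mem_filter, Finset.mem_powerset] at he
    rw [← he.2.1]
    exact F.uniform _ he.2.2
  valid := by
    intro e he v hv
    simp only [Finset.mem_filter, Finset.mem_powerset] at he
    exact Finset.mem_range.1 (he.1 hv)

@[simp] lemma blow_n (F : RGraph r) (n : ℕ) (φ : ℕ → ℕ) : (blow F n φ).n = n := rfl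

lemma mem_blow_iff {F : RGraph r} {n : ℕ} {φ : ℕ → ℕ} {e : Finset ℕ} :
    e ∈ (blow F n φ).edges ↔
      (∀ v ∈ e, v < n) ∧ Set.InjOn φ (e : Set ℕ) ∧ e.image φ ∈ F.edges := by
  simp only [blow, Finset.mem_filter, Finset.mem_powerset, Finset.card_image_iff]
  constructor
  · rintro ⟨h1, h2, h3⟩
    exact ⟨fun v hv => Finset.mem_range.1 (h1 hv), h2, h3⟩
  · rintro ⟨h1, h2, h3⟩
    exact ⟨fun v hv => Finset.mem_range.2 (h1 v hv), h2, h3⟩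

lemma blow_isBlowupMap (F : RGraph r) (n : ℕ) (φ : ℕ → ℕ) (h : ∀ v < n, φ v < F.n) :
    IsBlowupMap F (blow F n φ) φ := by
  refine ⟨h, fun e => ?_⟩
  rw [mem_blow_iff]
  rfl

lemma isBlowupMap_id (G : RGraph r) : IsBlowupMap G G id := by
  refine ⟨fun v hv => hv, fun e => ?_⟩
  simp only [Finset.image_id, id]
  constructor
  · intro he
    exact ⟨fun v hv => G.valid e he v hv, Set.injOn_id _, he⟩
  · rintro ⟨-, -, he⟩
    exact he

lemma isBlowupMap_comp {F G : RGraph r} {φ : ℕ → ℕ} (n : ℕ) (ψ : ℕ → ℕ)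
    (hb : IsBlowupMap F G φ) (hψ : ∀ k < n, ψ k < G.n) :
    IsBlowupMap G (blow F n (fun k => φ (ψ k))) ψ := by
  refine ⟨hψ, fun e => ?_⟩
  rw [mem_blow_iff, hb.2 (e.image ψ)]
  simp only [blow_n, Finset.image_image]
  constructor
  · rintro ⟨h1, h2, h3⟩
    have hinjψ : Set.InjOn ψ (e : Set ℕ) := by
      intro a ha b hb hab
      exact h2 ha hb (by simp [Function.comp, hab])
    refine ⟨h1, hinjψ, fun v hv => ?_, ?_, h3⟩
    · obtain ⟨a, ha, rfl⟩ := Finset.mem_image.1 hv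
      exact hψ a (h1 a ha)
    · intro a ha b hb hab
      simp only [Finset.coe_image, Set.mem_image, Finset.mem_coe] at ha hb
      obtain ⟨a', ha', rfl⟩ := ha
      obtain ⟨b', hb', rfl⟩ := hb
      rw [h2 ha' hb' hab]
  · rintro ⟨h1, h2, h3, h4, h5⟩
    refine ⟨h1, ?_, h5⟩
    intro a ha b hb hab
    refine h2 ha hb (h4 ?_ ?_ hab)
    · exact Finset.mem_coe.2 (Finset.mem_image_of_mem ψ ha)
    · exact Finset.mem_coe.2 (Finset.mem_image_of_mem ψ hb)

end Aux
section Aux2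
open Finset
variable {r : ℕ}

/-- Core counting identity: sums of products over a blowup's edges. -/
lemma sum_prod_blowup {F G : RGraph r} {φ : ℕ → ℕ}
    (hb : IsBlowupMap F G φ) (ν : ℕ → ℝ) :
    ∑ e ∈ G.edges, ∏ v ∈ e, ν v
      = ∑ E ∈ F.edges, ∏ i ∈ E, ∑ v ∈ (Finset.range G.n).filter (fun v => φ v = i), ν v := by
  classical
  obtain ⟨hφ, hedge⟩ := hb
  have hmaps : ∀ e ∈ G.edges, e.image φ ∈ F.edges := fun e he => ((hedge e).1 he).2.2
  rw [← Finset.sum_fiberwise_of_maps_to (g := fun e => e.image φ) hmaps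
    (fun e => ∏ v ∈ e, ν v)]
  refine Finset.sum_congr rfl fun E hE => ?_
  set S : ℕ → Finset ℕ := fun i => (Finset.range G.n).filter (fun v => φ v = i) with hS
  rw [Finset.prod_sum E S (fun _ j => ν j)]
  refine Finset.sum_nbij' (i := fun e => fun i _ => (e.filter (fun v => φ v = i)).sum id)
    (j := fun p => E.attach.image fun x => p x.1 x.2) ?_ ?_ ?_ ?_ ?_
  · -- maps into pi
    intro e he
    simp only [Finset.mem_filter] at he
    obtain ⟨heG, himg⟩ := he
    obtain ⟨hsub, hinj, himgF⟩ := (hedge e).1 heG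
    rw [Finset.mem_pi]
    intro i hi
    rw [← himg] at hi
    obtain ⟨v, hv, rfl⟩ := Finset.mem_image.1 hi
    show (e.filter (fun u => φ u = φ v)).sum id ∈ S (φ v)
    have hfil : e.filter (fun u => φ u = φ v) = {v} := by
      apply Finset.eq_singleton_iff_unique_mem.2
      refine ⟨Finset.mem_filter.2 ⟨hv, rfl⟩, fun u hu => ?_⟩
      obtain ⟨hu1, hu2⟩ := Finset.mem_filter.1 hu
      exact hinj hu1 hv hu2
    rw [hfil, Finset.sum_singleton, hS]
    exact Finset.mem_filter.2 ⟨Finset.mem_range.2 (hsub v hv), rfl⟩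
  · -- inverse maps into edge-fiber set
    intro p hp
    rw [Finset.mem_pi] at hp
    have hval : ∀ x : {a // a ∈ E}, p x.1 x.2 ∈ S x.1 := fun x => hp x.1 x.2
    have hvlt : ∀ x : {a // a ∈ E}, p x.1 x.2 < G.n := by
      intro x
      have := hval x
      rw [hS, Finset.mem_filter, Finset.mem_range] at this
      exact this.1
    have hphi : ∀ x : {a // a ∈ E}, φ (p x.1 x.2) = x.1 := by
      intro x
      have := hval x
      rw [hS, Finset.mem_filter] at this
      exact this.2
    set e : Finset ℕ := E.attach.image fun x => p x.1 x.2 with he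
    have hmem : ∀ v ∈ e, v < G.n := by
      intro v hv
      obtain ⟨x, -, rfl⟩ := Finset.mem_image.1 hv
      exact hvlt x
    have himg : e.image φ = E := by
      rw [he, Finset.image_image]
      apply Finset.ext
      intro i
      simp only [Finset.mem_image, Finset.mem_attach, true_and, Function.comp]
      constructor
      · rintro ⟨x, rfl⟩
        rw [hphi x]; exact x.2
      · intro hi
        exact ⟨⟨i, hi⟩, hphi ⟨i, hi⟩⟩
    have hinj : Set.InjOn φ (e : Set ℕ) := by
      intro a ha b hbm hab
      obtain ⟨x, -, rfl⟩ := Finset.mem_image.1 (Finset.mem_coe.1 ha)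
      obtain ⟨y, -, rfl⟩ := Finset.mem_image.1 (Finset.mem_coe.1 hbm)
      rw [hphi x, hphi y] at hab
      have : x = y := Subtype.ext hab
      rw [this]
    refine Finset.mem_filter.2 ⟨(hedge e).2 ⟨hmem, hinj, himg ▸ hE⟩, himg⟩
  · -- left inverse
    intro e he
    simp only [Finset.mem_filter] at he
    obtain ⟨heG, himg⟩ := he
    obtain ⟨hsub, hinj, himgF⟩ := (hedge e).1 heG
    apply Finset.ext
    intro v
    simp only [Finset.mem_image, Finset.mem_attach, true_and]
    constructor
    · rintro ⟨x, rfl⟩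
      have hx : x.1 ∈ e.image φ := himg ▸ x.2
      obtain ⟨u, hu, hphiu⟩ := Finset.mem_image.1 hx
      have hfil : e.filter (fun w => φ w = x.1) = {u} := by
        apply Finset.eq_singleton_iff_unique_mem.2
        refine ⟨Finset.mem_filter.2 ⟨hu, hphiu⟩, fun w hw => ?_⟩
        obtain ⟨hw1, hw2⟩ := Finset.mem_filter.1 hw
        exact hinj hw1 hu (hw2.trans hphiu.symm)
      rw [hfil, Finset.sum_singleton]
      exact hu
    · intro hv
      have hphi : φ v ∈ E := himg ▸ Finset.mem_image_of_mem φ hv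
      refine ⟨⟨φ v, hphi⟩, ?_⟩
      have hfil : e.filter (fun w => φ w = φ v) = {v} := by
        apply Finset.eq_singleton_iff_unique_mem.2
        refine ⟨Finset.mem_filter.2 ⟨hv, rfl⟩, fun w hw => ?_⟩
        obtain ⟨hw1, hw2⟩ := Finset.mem_filter.1 hw
        exact hinj hw1 hv hw2
      rw [hfil, Finset.sum_singleton]
      rfl
  · -- right inverse
    intro p hp
    rw [Finset.mem_pi] at hp
    have hphi : ∀ x : {a // a ∈ E}, φ (p x.1 x.2) = x.1 := by
      intro x
      have := hp x.1 x.2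
      rw [hS, Finset.mem_filter] at this
      exact this.2
    funext i hi
    show ((E.attach.image fun x => p x.1 x.2).filter (fun v => φ v = i)).sum id = p i hi
    have hfil : (E.attach.image fun x => p x.1 x.2).filter (fun v => φ v = i) = {p i hi} := by
      apply Finset.eq_singleton_iff_unique_mem.2
      constructor
      · refine Finset.mem_filter.2 ⟨Finset.mem_image.2 ⟨⟨i, hi⟩, Finset.mem_attach _ _, rfl⟩, ?_⟩
        exact hphi ⟨i, hi⟩
      · intro w hw
        obtain ⟨hw1, hw2⟩ := Finset.mem_filter.1 hw
        obtain ⟨x, -, rfl⟩ := Finset.mem_image.1 hw1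
        have : x = ⟨i, hi⟩ := Subtype.ext ((hphi x).symm.trans hw2)
        rw [this]
    rw [hfil, Finset.sum_singleton]
    rfl
  · -- function values agree
    intro e he
    simp only [Finset.mem_filter] at he
    obtain ⟨heG, himg⟩ := he
    obtain ⟨hsub, hinj, himgF⟩ := (hedge e).1 heG
    show ∏ v ∈ e, ν v = ∏ x ∈ E.attach, ν ((e.filter (fun v => φ v = x.1)).sum id)
    rw [Finset.prod_attach E (fun i => ν ((e.filter (fun v => φ v = i)).sum id))]
    rw [← himg]
    rw [Finset.prod_image ?hinj]
    case hinj =>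
      intro a ha b hb hab
      exact hinj ha hb hab
    refine Finset.prod_congr rfl fun v hv => ?_
    have hfil : e.filter (fun w => φ w = φ v) = {v} := by
      apply Finset.eq_singleton_iff_unique_mem.2
      refine ⟨Finset.mem_filter.2 ⟨hv, rfl⟩, fun w hw => ?_⟩
      obtain ⟨hw1, hw2⟩ := Finset.mem_filter.1 hw
      exact hinj hw1 hv hw2
    rw [hfil, Finset.sum_singleton]
    rfl
end Aux2
section Aux3
open Finset
variable {r : ℕ}

lemma card_eq_sum_prod_blowup {F G : RGraph r} {φ : ℕ → ℕ} (hb : IsBlowupMap F G φ) :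
    (G.edges.card : ℝ)
      = ∑ E ∈ F.edges, ∏ i ∈ E,
          (((Finset.range G.n).filter (fun v => φ v = i)).card : ℝ) := by
  have h := sum_prod_blowup hb (fun _ => (1 : ℝ))
  simp only [Finset.prod_const_one, Finset.sum_const, nsmul_eq_mul, mul_one,
    Finset.sum_const] at h
  rw [h]

lemma lamW_of_wIsBlowup {F G : RGraph r} {μ ν : ℕ → ℝ} (hw : WIsBlowup F μ G ν) :
    lamW G ν = lamW F μ := by
  obtain ⟨hνW, φ, hb, hfib⟩ := hw
  rw [lamW, sum_prod_blowup hb ν]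
  refine Finset.sum_congr rfl fun E hE => Finset.prod_congr rfl fun i hi => ?_
  exact (hfib i (F.valid E hE i hi)).symm

lemma isWeight_pos {F : RGraph r} {μ : ℕ → ℝ} (h : IsWeight F μ) : 1 ≤ F.n := by
  by_contra hn
  push_neg at hn
  interval_cases hFn : F.n
  · have := h.2.2
    rw [hFn] at this
    simp at this

lemma isWeight_le_one {F : RGraph r} {μ : ℕ → ℝ} (h : IsWeight F μ) {v : ℕ} : μ v ≤ 1 := by
  by_cases hv : v < F.n
  · calc μ v ≤ ∑ u ∈ Finset.range F.n, μ u :=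
        Finset.single_le_sum (fun i _ => h.1 i) (Finset.mem_range.2 hv)
    _ = 1 := h.2.2
  · rw [h.2.1 v (le_of_not_gt hv)]; norm_num

/-- partial sums of class sizes -/
lemma exists_block_index (c : ℕ → ℕ) (m : ℕ) :
    ∀ k < ∑ u ∈ Finset.range m, c u, ∃ v < m,
      (∑ u ∈ Finset.range v, c u) ≤ k ∧ k < ∑ u ∈ Finset.range (v + 1), c u := by
  induction m with
  | zero => simp
  | succ m ih =>
    intro k hk
    by_cases hk' : k < ∑ u ∈ Finset.range m, c u
    · obtain ⟨v, hv, h1, h2⟩ := ih k hk'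
      exact ⟨v, Nat.lt_succ_of_lt hv, h1, h2⟩
    · exact ⟨m, Nat.lt_succ_self m, le_of_not_gt hk', hk⟩

/-- The block map for class sizes `c` on `m` classes. -/
def blockMap (c : ℕ → ℕ) (m : ℕ) : ℕ → ℕ :=
  fun k => ((Finset.range m).filter (fun v => (∑ u ∈ Finset.range (v + 1), c u) ≤ k)).card

lemma blockMap_eq (c : ℕ → ℕ) (m : ℕ) {v k : ℕ} (hv : v < m)
    (h1 : (∑ u ∈ Finset.range v, c u) ≤ k) (h2 : k < ∑ u ∈ Finset.range (v + 1), c u) :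
    blockMap c m k = v := by
  have hmono : ∀ a b : ℕ, a ≤ b → (∑ u ∈ Finset.range a, c u) ≤ ∑ u ∈ Finset.range b, c u := by
    intro a b hab
    exact Finset.sum_le_sum_of_subset (Finset.range_subset_range.2 hab)
  have : (Finset.range m).filter (fun w => (∑ u ∈ Finset.range (w + 1), c u) ≤ k)
      = Finset.range v := by
    apply Finset.ext
    intro w
    simp only [Finset.mem_filter, Finset.mem_range]
    constructor
    · rintro ⟨hwm, hw⟩
      by_contra hcon
      push_neg at hcon
      exact absurd (le_trans (hmono _ _ (Nat.succ_le_succ hcon)) hw) (not_le.2 h2)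
    · intro hwv
      exact ⟨lt_trans hwv hv, le_trans (hmono _ _ hwv) h1⟩
  rw [blockMap, this, Finset.card_range]

lemma blockMap_lt (c : ℕ → ℕ) (m : ℕ) {k : ℕ} (hk : k < ∑ u ∈ Finset.range m, c u) :
    blockMap c m k < m := by
  obtain ⟨v, hv, h1, h2⟩ := exists_block_index c m k hk
  rw [blockMap_eq c m hv h1 h2]
  exact hv

lemma blockMap_fiber (c : ℕ → ℕ) (m : ℕ) {v : ℕ} (hv : v < m) :
    (Finset.range (∑ u ∈ Finset.range m, c u)).filter (fun k => blockMap c m k = v)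
      = Finset.Ico (∑ u ∈ Finset.range v, c u) (∑ u ∈ Finset.range (v + 1), c u) := by
  have hmono : ∀ a b : ℕ, a ≤ b → (∑ u ∈ Finset.range a, c u) ≤ ∑ u ∈ Finset.range b, c u := by
    intro a b hab
    exact Finset.sum_le_sum_of_subset (Finset.range_subset_range.2 hab)
  apply Finset.ext
  intro k
  simp only [Finset.mem_filter, Finset.mem_range, Finset.mem_Ico]
  constructor
  · rintro ⟨hk, rfl⟩
    obtain ⟨v', hv', h1, h2⟩ := exists_block_index c m k hk
    rw [blockMap_eq c m hv' h1 h2]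
    exact ⟨h1, h2⟩
  · rintro ⟨h1, h2⟩
    have hkm : k < ∑ u ∈ Finset.range m, c u :=
      lt_of_lt_of_le h2 (hmono _ _ (Nat.succ_le_of_lt hv))
    exact ⟨hkm, blockMap_eq c m hv h1 h2⟩

lemma blockMap_fiber_card (c : ℕ → ℕ) (m : ℕ) {v : ℕ} (hv : v < m) :
    ((Finset.range (∑ u ∈ Finset.range m, c u)).filter
      (fun k => blockMap c m k = v)).card = c v := by
  rw [blockMap_fiber c m hv, Nat.card_Ico, Finset.sum_range_succ]
  omega

/-- Group a sum over a composite fiber. -/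
lemma sum_filter_comp {N m : ℕ} {ψ : ℕ → ℕ} (hψ : ∀ k < N, ψ k < m)
    (P : ℕ → Prop) [DecidablePred P] (g : ℕ → ℝ) :
    ∑ k ∈ (Finset.range N).filter (fun k => P (ψ k)), g k
      = ∑ v ∈ (Finset.range m).filter P,
          ∑ k ∈ (Finset.range N).filter (fun k => ψ k = v), g k := by
  rw [← Finset.sum_fiberwise_of_maps_to (g := ψ) (t := (Finset.range m).filter P)
    (fun k hk => by
      simp only [Finset.mem_filter, Finset.mem_range] at hk ⊢
      exact ⟨hψ k hk.1, hk.2⟩) g]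
  refine Finset.sum_congr rfl fun v hv => Finset.sum_congr ?_ fun _ _ => rfl
  apply Finset.ext
  intro k
  simp only [Finset.mem_filter, Finset.mem_range] at hv ⊢
  constructor
  · rintro ⟨⟨hk, -⟩, h2⟩
    exact ⟨hk, h2⟩
  · rintro ⟨hk, h2⟩
    exact ⟨⟨hk, h2 ▸ hv.2⟩, h2⟩

/-- product perturbation bound -/
lemma abs_prod_sub_prod_le (e : Finset ℕ) (f g : ℕ → ℝ) (η : ℝ) (hη : 0 ≤ η)
    (hf : ∀ v ∈ e, 0 ≤ f v ∧ f v ≤ 1) (hg : ∀ v ∈ e, 0 ≤ g v ∧ g v ≤ 1)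
    (hfg : ∀ v ∈ e, |f v - g v| ≤ η) :
    |∏ v ∈ e, f v - ∏ v ∈ e, g v| ≤ e.card * η := by
  classical
  induction e using Finset.cons_induction with
  | empty => simp
  | cons a s ha ih =>
    rw [Finset.prod_cons, Finset.prod_cons, Finset.card_cons]
    push_cast
    have hmem : a ∈ Finset.cons a s ha := Finset.mem_cons_self a s
    have h1 : ∀ v ∈ s, 0 ≤ f v ∧ f v ≤ 1 := fun v hv => hf v (Finset.mem_cons_of_mem hv)
    have h2 : ∀ v ∈ s, 0 ≤ g v ∧ g v ≤ 1 := fun v hv => hg v (Finset.mem_cons_of_mem hv)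
    have h3 : ∀ v ∈ s, |f v - g v| ≤ η := fun v hv => hfg v (Finset.mem_cons_of_mem hv)
    have ihs := ih h1 h2 h3
    have hPf : 0 ≤ ∏ v ∈ s, f v := Finset.prod_nonneg fun v hv => (h1 v hv).1
    have hPg : 0 ≤ ∏ v ∈ s, g v := Finset.prod_nonneg fun v hv => (h2 v hv).1
    have hPg1 : ∏ v ∈ s, g v ≤ 1 := Finset.prod_le_one (fun v hv => (h2 v hv).1)
      (fun v hv => (h2 v hv).2)
    calc |f a * ∏ v ∈ s, f v - g a * ∏ v ∈ s, g v|
        = |f a * (∏ v ∈ s, f v - ∏ v ∈ s, g v) + (f a - g a) * ∏ v ∈ s, g v| := by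
          ring_nf
      _ ≤ |f a * (∏ v ∈ s, f v - ∏ v ∈ s, g v)| + |(f a - g a) * ∏ v ∈ s, g v| :=
          abs_add_le _ _
      _ = |f a| * |∏ v ∈ s, f v - ∏ v ∈ s, g v| + |f a - g a| * |∏ v ∈ s, g v| := by
          rw [abs_mul, abs_mul]
      _ ≤ 1 * (s.card * η) + η * 1 := by
          have hfa : |f a| ≤ 1 := abs_le.2 ⟨by linarith [(hf a hmem).1], (hf a hmem).2⟩
          have hga : |∏ v ∈ s, g v| ≤ 1 := abs_le.2 ⟨by linarith, hPg1⟩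
          have hm1 := mul_le_mul hfa ihs (abs_nonneg _) zero_le_one
          have hm2 := mul_le_mul (hfg a hmem) hga (abs_nonneg _) hη
          linarith
      _ ≤ ((s.card : ℝ) + 1) * η := by ring_nf; nlinarith [hη]
end Aux3
section Aux4
open Finset
variable {r : ℕ}

lemma dPrime_nonneg {E1 E2 : Finset (Finset ℕ)} {ν : ℕ → ℝ} (hν : ∀ v, 0 ≤ ν v) :
    0 ≤ dPrime E1 E2 ν :=
  Finset.sum_nonneg fun e _ => Finset.prod_nonneg fun v _ => hν v

lemma wDist_nonneg (F1 : RGraph r) (μ1 : ℕ → ℝ) (F2 : RGraph r) (μ2 : ℕ → ℝ) :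
    0 ≤ wDist F1 μ1 F2 μ2 := by
  apply Real.sInf_nonneg
  rintro x ⟨G1, G2, ν, -, hw1, -, rfl⟩
  exact dPrime_nonneg hw1.1.1

lemma wDistFam_nonneg (𝔥 : Set (RGraph r)) (F : RGraph r) (μ : ℕ → ℝ) :
    0 ≤ wDistFam 𝔥 F μ := by
  apply Real.sInf_nonneg
  rintro x ⟨H, -, ν, -, rfl⟩
  exact wDist_nonneg F μ H ν

lemma lamW_nonneg {F : RGraph r} {μ : ℕ → ℝ} (hμ : ∀ v, 0 ≤ μ v) : 0 ≤ lamW F μ :=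
  Finset.sum_nonneg fun e _ => Finset.prod_nonneg fun v _ => hμ v

lemma edges_card_le {F : RGraph r} : F.edges.card ≤ 2 ^ F.n := by
  have hsub : F.edges ⊆ (Finset.range F.n).powerset := by
    intro e he
    exact Finset.mem_powerset.2 fun v hv => Finset.mem_range.2 (F.valid e he v hv)
  calc F.edges.card ≤ ((Finset.range F.n).powerset).card := Finset.card_le_card hsub
    _ = 2 ^ F.n := by rw [Finset.card_powerset, Finset.card_range]

lemma lamW_le_three {F : RGraph r} {μ : ℕ → ℝ} (hμ : IsWeight F μ) : lamW F μ ≤ 3 := by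
  have hsub : F.edges ⊆ (Finset.range F.n).powerset := by
    intro e he
    exact Finset.mem_powerset.2 fun v hv => Finset.mem_range.2 (F.valid e he v hv)
  have h1 : lamW F μ ≤ ∑ e ∈ (Finset.range F.n).powerset, ∏ v ∈ e, μ v :=
    Finset.sum_le_sum_of_subset_of_nonneg hsub
      (fun e _ _ => Finset.prod_nonneg fun v _ => hμ.1 v)
  have h2 : ∑ e ∈ (Finset.range F.n).powerset, ∏ v ∈ e, μ v
      = ∏ v ∈ Finset.range F.n, (μ v + 1) := by
    rw [Finset.prod_add]
    refine Finset.sum_congr rfl fun t ht => ?_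
    simp
  have h3 : ∏ v ∈ Finset.range F.n, (μ v + 1) ≤ ∏ v ∈ Finset.range F.n, Real.exp (μ v) := by
    apply Finset.prod_le_prod
    · intro v _
      have := hμ.1 v
      linarith
    · intro v _
      exact Real.add_one_le_exp (μ v)
  have h4 : ∏ v ∈ Finset.range F.n, Real.exp (μ v) = Real.exp 1 := by
    rw [← Real.exp_sum, hμ.2.2]
  have h5 : Real.exp 1 ≤ 3 := by
    have := Real.exp_one_lt_d9
    linarith
  linarith

lemma lamFam_bddAbove (𝔥 : Set (RGraph r)) :
    BddAbove {x : ℝ | ∃ H ∈ 𝔥, ∃ μ, IsWeight H μ ∧ x = lamW H μ} := by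
  refine ⟨3, ?_⟩
  rintro x ⟨H, -, μ, hμ, rfl⟩
  exact lamW_le_three hμ

lemma lamW_le_lamFam {𝔥 : Set (RGraph r)} {H : RGraph r} (hH : H ∈ 𝔥) {μ : ℕ → ℝ}
    (hμ : IsWeight H μ) : lamW H μ ≤ lamFam 𝔥 :=
  le_csSup (lamFam_bddAbove 𝔥) ⟨H, hH, μ, hμ, rfl⟩

lemma isWeight_uniform {F : RGraph r} (hn : 1 ≤ F.n) : IsWeight F (uniformW F) := by
  refine ⟨fun v => ?_, fun v hv => ?_, ?_⟩
  · simp only [uniformW]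
    split_ifs with h
    · positivity
    · exact le_rfl
  · simp only [uniformW, if_neg (not_lt.2 hv)]
  · simp only [uniformW]
    rw [Finset.sum_congr rfl (fun v hv => if_pos (Finset.mem_range.1 hv)),
      Finset.sum_const, Finset.card_range, nsmul_eq_mul]
    have h0 : (F.n : ℝ) ≠ 0 := by positivity
    field_simp

lemma lamW_uniform {F : RGraph r} :
    lamW F (uniformW F) = F.edges.card * ((F.n : ℝ))⁻¹ ^ r := by
  rw [lamW]
  have hterm : ∀ e ∈ F.edges, ∏ v ∈ e, uniformW F v = ((F.n : ℝ))⁻¹ ^ r := by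
    intro e he
    have : ∀ v ∈ e, uniformW F v = ((F.n : ℝ))⁻¹ := by
      intro v hv
      simp only [uniformW, if_pos (F.valid e he v hv)]
    rw [Finset.prod_congr rfl this, Finset.prod_const, F.uniform e he]
  rw [Finset.sum_congr rfl hterm, Finset.sum_const, nsmul_eq_mul]

lemma wIsBlowup_self {G : RGraph r} {ν : ℕ → ℝ} (hν : IsWeight G ν) : WIsBlowup G ν G ν := by
  refine ⟨hν, id, isBlowupMap_id G, fun i hi => ?_⟩
  have : (Finset.range G.n).filter (fun v => id v = i) = {i} := by
    apply Finset.ext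
    intro k
    simp only [Finset.mem_filter, Finset.mem_range, id, Finset.mem_singleton]
    constructor
    · rintro ⟨-, rfl⟩; rfl
    · rintro rfl; exact ⟨hi, rfl⟩
  rw [this, Finset.sum_singleton]

lemma mFam_le {𝔥 : Set (RGraph r)} {N : ℕ} (hN : 1 ≤ N) (hlam : 0 ≤ lamFam 𝔥) :
    (mFam 𝔥 N : ℝ) ≤ lamFam 𝔥 * (N : ℝ) ^ r := by
  rw [mFam]
  set K := {k | ∃ F ∈ 𝔥, F.n = N ∧ F.edges.card = k} with hK
  rcases Set.eq_empty_or_nonempty K with hKe | hKne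
  · rw [hKe]
    simp only [csSup_empty, bot_eq_zero', Nat.cast_zero]
    positivity
  · have hbdd : BddAbove K := by
      refine ⟨2 ^ N, ?_⟩
      rintro k ⟨H, -, hHn, rfl⟩
      calc H.edges.card ≤ 2 ^ H.n := edges_card_le
        _ = 2 ^ N := by rw [hHn]
    obtain ⟨H, hHmem, hHn, hHcard⟩ := Nat.sSup_mem hKne hbdd
    rw [← hHcard]
    have huw : IsWeight H (uniformW H) := isWeight_uniform (hHn ▸ hN)
    have h1 : lamW H (uniformW H) ≤ lamFam 𝔥 := lamW_le_lamFam hHmem huw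
    rw [lamW_uniform, hHn] at h1
    have hNpos : (0 : ℝ) < (N : ℝ) := by positivity
    have : (H.edges.card : ℝ) * ((N : ℝ))⁻¹ ^ r * (N : ℝ) ^ r ≤ lamFam 𝔥 * (N : ℝ) ^ r := by
      apply mul_le_mul_of_nonneg_right h1 (by positivity)
    calc (H.edges.card : ℝ)
        = (H.edges.card : ℝ) * ((N : ℝ))⁻¹ ^ r * (N : ℝ) ^ r := by
          rw [mul_assoc, ← mul_pow, inv_mul_cancel₀ (ne_of_gt hNpos), one_pow, mul_one]
      _ ≤ lamFam 𝔥 * (N : ℝ) ^ r := this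
end Aux4
section Aux5
open Finset
variable {r : ℕ}

lemma overlap_eq {a a' b b' : ℝ} (ha : a ≤ a') (hb : b ≤ b') :
    max a (min a' b') - max a (min a' b) = max 0 (min a' b' - max a b) := by
  simp only [max_def, min_def]
  split_ifs <;> linarith

lemma sum_range_mul_eq (M K : ℕ) (f : ℕ → ℝ) :
    ∑ k ∈ Finset.range (M * K), f k
      = ∑ i ∈ Finset.range M, ∑ j ∈ Finset.range K, f (i * K + j) := by
  rw [← Finset.sum_product']
  refine Finset.sum_nbij' (i := fun k => (k / K, k % K)) (j := fun p => p.1 * K + p.2)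
    ?_ ?_ ?_ ?_ ?_
  · intro k hk
    rw [Finset.mem_range] at hk
    have hK : 0 < K := by
      rcases Nat.eq_zero_or_pos K with h | h
      · subst h; simp at hk
      · exact h
    simp only [Finset.mem_product, Finset.mem_range]
    exact ⟨(Nat.div_lt_iff_lt_mul hK).2 hk, Nat.mod_lt _ hK⟩
  · intro p hp
    simp only [Finset.mem_product, Finset.mem_range] at hp
    rw [Finset.mem_range]
    calc p.1 * K + p.2 < p.1 * K + K := Nat.add_lt_add_left hp.2 _
      _ = (p.1 + 1) * K := (Nat.succ_mul p.1 K).symm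
      _ ≤ M * K := Nat.mul_le_mul_right K hp.1
  · intro k hk
    simp only
    exact Nat.div_add_mod' k K
  · intro p hp
    simp only [Finset.mem_product, Finset.mem_range] at hp
    have hKp : 0 < K := Nat.pos_of_ne_zero (fun h => by subst h; exact Nat.not_lt_zero _ hp.2)
    have h1 : (p.1 * K + p.2) / K = p.1 := by
      rw [Nat.add_comm, Nat.add_mul_div_right _ _ hKp, Nat.div_eq_of_lt hp.2]
      omega
    have h2 : (p.1 * K + p.2) % K = p.2 := by
      rw [Nat.add_comm, Nat.add_mul_mod_self_right, Nat.mod_eq_of_lt hp.2]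
    simp [h1, h2]
  · intro k hk
    simp only
    congr 1
    exact (Nat.div_add_mod' k K).symm

lemma div_fiber_eq {M K : ℕ} (hK : 0 < K) {i : ℕ} (hi : i < M) :
    (Finset.range (M * K)).filter (fun k => k / K = i)
      = (Finset.range K).image (fun j => i * K + j) := by
  apply Finset.ext
  intro k
  simp only [Finset.mem_filter, Finset.mem_range, Finset.mem_image]
  constructor
  · rintro ⟨hk, rfl⟩
    exact ⟨k % K, Nat.mod_lt _ hK, Nat.div_add_mod' k K⟩
  · rintro ⟨j, hj, rfl⟩
    have h1 : (i * K + j) / K = i := by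
      rw [Nat.add_comm, Nat.add_mul_div_right _ _ hK, Nat.div_eq_of_lt hj]
      omega
    refine ⟨?_, h1⟩
    calc i * K + j < i * K + K := Nat.add_lt_add_left hj _
      _ = (i + 1) * K := (Nat.succ_mul i K).symm
      _ ≤ M * K := Nat.mul_le_mul_right K hi

lemma mod_fiber_eq {M K : ℕ} (hK : 0 < K) {j : ℕ} (hj : j < K) :
    (Finset.range (M * K)).filter (fun k => k % K = j)
      = (Finset.range M).image (fun i => i * K + j) := by
  apply Finset.ext
  intro k
  simp only [Finset.mem_filter, Finset.mem_range, Finset.mem_image]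
  constructor
  · rintro ⟨hk, rfl⟩
    refine ⟨k / K, (Nat.div_lt_iff_lt_mul hK).2 hk, Nat.div_add_mod' k K⟩
  · rintro ⟨i, hi, rfl⟩
    have h2 : (i * K + j) % K = j := by
      rw [Nat.add_comm, Nat.add_mul_mod_self_right, Nat.mod_eq_of_lt hj]
    refine ⟨?_, h2⟩
    calc i * K + j < i * K + K := Nat.add_lt_add_left hj _
      _ = (i + 1) * K := (Nat.succ_mul i K).symm
      _ ≤ M * K := Nat.mul_le_mul_right K hi

lemma exists_common_blowup {F H : RGraph r} {μ ν : ℕ → ℝ}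
    (hμ : IsWeight F μ) (hν : IsWeight H ν) :
    ∃ (G1 G2 : RGraph r) (w : ℕ → ℝ), G1.n = G2.n ∧
      WIsBlowup F μ G1 w ∧ WIsBlowup H ν G2 w := by
  classical
  set M := F.n with hM
  set K := H.n with hK
  have hM1 : 1 ≤ M := isWeight_pos hμ
  have hK1 : 1 ≤ K := isWeight_pos hν
  set A : ℕ → ℝ := fun i => ∑ u ∈ Finset.range i, μ u with hA
  set B : ℕ → ℝ := fun j => ∑ u ∈ Finset.range j, ν u with hB
  have hAmono : ∀ i, A i ≤ A (i + 1) := by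
    intro i
    rw [hA]
    simp only [Finset.sum_range_succ]
    have := hμ.1 i
    linarith
  have hBmono : ∀ j, B j ≤ B (j + 1) := by
    intro j
    rw [hB]
    simp only [Finset.sum_range_succ]
    have := hν.1 j
    linarith
  have hA0 : A 0 = 0 := by simp [hA]
  have hB0 : B 0 = 0 := by simp [hB]
  have hAM : A M = 1 := hμ.2.2
  have hBK : B K = 1 := hν.2.2
  have hAnonneg : ∀ i, 0 ≤ A i := fun i => Finset.sum_nonneg fun u _ => hμ.1 u
  have hBnonneg : ∀ j, 0 ≤ B j := fun j => Finset.sum_nonneg fun u _ => hν.1 u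
  have hAle1 : ∀ i, i ≤ M → A i ≤ 1 := by
    intro i hi
    rw [← hAM, hA]
    exact Finset.sum_le_sum_of_subset_of_nonneg (Finset.range_subset_range.2 hi)
      (fun u _ _ => hμ.1 u)
  have hBle1 : ∀ j, j ≤ K → B j ≤ 1 := by
    intro j hj
    rw [← hBK, hB]
    exact Finset.sum_le_sum_of_subset_of_nonneg (Finset.range_subset_range.2 hj)
      (fun u _ _ => hν.1 u)
  set w : ℕ → ℝ := fun k => if k < M * K then
      max 0 (min (A (k / K + 1)) (B (k % K + 1)) - max (A (k / K)) (B (k % K))) else 0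
    with hw
  have hKpos : 0 < K := hK1
  have hwval : ∀ i < M, ∀ j < K,
      w (i * K + j) = max 0 (min (A (i + 1)) (B (j + 1)) - max (A i) (B j)) := by
    intro i hi j hj
    have hlt : i * K + j < M * K := by
      calc i * K + j < i * K + K := Nat.add_lt_add_left hj _
        _ = (i + 1) * K := (Nat.succ_mul i K).symm
        _ ≤ M * K := Nat.mul_le_mul_right K hi
    have h1 : (i * K + j) / K = i := by
      rw [Nat.add_comm, Nat.add_mul_div_right _ _ hKpos, Nat.div_eq_of_lt hj]
      omega
    have h2 : (i * K + j) % K = j := by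
      rw [Nat.add_comm, Nat.add_mul_mod_self_right, Nat.mod_eq_of_lt hj]
    simp only [hw, if_pos hlt, h1, h2]
  -- row sums
  have hrow : ∀ i < M, ∑ j ∈ Finset.range K, w (i * K + j) = μ i := by
    intro i hi
    have hterm : ∀ j ∈ Finset.range K, w (i * K + j)
        = (fun j => max (A i) (min (A (i + 1)) (B j))) (j + 1)
          - (fun j => max (A i) (min (A (i + 1)) (B j))) j := by
      intro j hj
      rw [hwval i hi j (Finset.mem_range.1 hj)]
      exact (overlap_eq (hAmono i) (hBmono j)).symm
    rw [Finset.sum_congr rfl hterm,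
      Finset.sum_range_sub (fun j => max (A i) (min (A (i + 1)) (B j))) K]
    simp only [hB0, hBK]
    have e1 : min (A (i + 1)) 1 = A (i + 1) := min_eq_left (hAle1 _ hi)
    have e2 : min (A (i + 1)) 0 = 0 := min_eq_right (hAnonneg _)
    rw [e1, e2]
    have e3 : max (A i) (A (i + 1)) = A (i + 1) := max_eq_right (hAmono i)
    have e4 : max (A i) 0 = A i := max_eq_left (hAnonneg i)
    rw [e3, e4, hA]
    simp [Finset.sum_range_succ]
  -- column sums
  have hcol : ∀ j < K, ∑ i ∈ Finset.range M, w (i * K + j) = ν j := by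
    intro j hj
    have hterm : ∀ i ∈ Finset.range M, w (i * K + j)
        = (fun i => max (B j) (min (B (j + 1)) (A i))) (i + 1)
          - (fun i => max (B j) (min (B (j + 1)) (A i))) i := by
      intro i hi
      rw [hwval i (Finset.mem_range.1 hi) j hj]
      rw [min_comm (A (i+1)) (B (j+1)), max_comm (A i) (B j)]
      exact (overlap_eq (hBmono j) (hAmono i)).symm
    rw [Finset.sum_congr rfl hterm,
      Finset.sum_range_sub (fun i => max (B j) (min (B (j + 1)) (A i))) M]
    simp only [hA0, hAM]
    have e1 : min (B (j + 1)) 1 = B (j + 1) := min_eq_left (hBle1 _ hj)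
    have e2 : min (B (j + 1)) 0 = 0 := min_eq_right (hBnonneg _)
    rw [e1, e2]
    have e3 : max (B j) (B (j + 1)) = B (j + 1) := max_eq_right (hBmono j)
    have e4 : max (B j) 0 = B j := max_eq_left (hBnonneg j)
    rw [e3, e4, hB]
    simp [Finset.sum_range_succ]
  have hwnonneg : ∀ k, 0 ≤ w k := by
    intro k
    simp only [hw]
    split_ifs
    · exact le_max_left 0 _
    · exact le_rfl
  have hφ1 : ∀ k < M * K, k / K < M := fun k hk => (Nat.div_lt_iff_lt_mul hKpos).2 hk
  have hφ2 : ∀ k < M * K, k % K < K := fun k _ => Nat.mod_lt _ hKpos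
  refine ⟨blow F (M * K) (fun k => k / K), blow H (M * K) (fun k => k % K), w, rfl, ?_, ?_⟩
  · refine ⟨⟨hwnonneg, fun v hv => ?_, ?_⟩, fun k => k / K,
      blow_isBlowupMap F (M * K) _ hφ1, fun i hi => ?_⟩
    · simp only [hw]
      exact if_neg (not_lt.2 hv)
    · show ∑ k ∈ Finset.range (M * K), w k = 1
      rw [sum_range_mul_eq, Finset.sum_congr rfl (fun i hi => hrow i (Finset.mem_range.1 hi)),
        hμ.2.2]
    · show μ i = ∑ k ∈ (Finset.range (M * K)).filter (fun k => k / K = i), w k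
      rw [div_fiber_eq hKpos hi, Finset.sum_image (fun a _ b _ h => Nat.add_left_cancel h)]
      exact (hrow i hi).symm
  · refine ⟨⟨hwnonneg, fun v hv => ?_, ?_⟩, fun k => k % K,
      blow_isBlowupMap H (M * K) _ hφ2, fun j hj => ?_⟩
    · simp only [hw]
      exact if_neg (not_lt.2 hv)
    · show ∑ k ∈ Finset.range (M * K), w k = 1
      rw [sum_range_mul_eq, Finset.sum_congr rfl (fun i hi => hrow i (Finset.mem_range.1 hi)),
        hμ.2.2]
    · show ν j = ∑ k ∈ (Finset.range (M * K)).filter (fun k => k % K = j), w k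
      rw [mod_fiber_eq hKpos hj, Finset.sum_image (fun a _ b _ h =>
        Nat.eq_of_mul_eq_mul_right hKpos (Nat.add_right_cancel h))]
      exact (hcol j hj).symm
end Aux5
section Aux6
open Finset
variable {r : ℕ}

lemma one_add_pow_le {x : ℝ} (h0 : 0 ≤ x) (h1 : x ≤ 1) (k : ℕ) :
    (1 + x) ^ k ≤ 1 + ((2:ℝ) ^ k - 1) * x := by
  induction k with
  | zero => norm_num
  | succ k ih =>
    have hp : (1:ℝ) ≤ 2 ^ k := one_le_pow₀ (by norm_num : (1:ℝ) ≤ 2)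
    have hxx : 0 ≤ x - x ^ 2 := by nlinarith
    calc (1 + x) ^ (k + 1) = (1 + x) ^ k * (1 + x) := by ring
      _ ≤ (1 + ((2:ℝ) ^ k - 1) * x) * (1 + x) :=
          mul_le_mul_of_nonneg_right ih (by linarith)
      _ = 1 + (2:ℝ) ^ k * x + ((2:ℝ) ^ k - 1) * x ^ 2 := by ring
      _ ≤ 1 + ((2:ℝ) ^ (k + 1) - 1) * x := by
          have hmn := mul_nonneg (by linarith : (0:ℝ) ≤ (2:ℝ) ^ k - 1) hxx
          have h2 : (2:ℝ) ^ (k + 1) = 2 * 2 ^ k := by ring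
          nlinarith [hmn, h2]

/-- Every positive size is realized by a blowup of a given graph with at least one vertex. -/
lemma exists_member_size {𝔥 : Set (RGraph r)} (hH : Clonable 𝔥) {H0 : RGraph r}
    (hH0 : H0 ∈ 𝔥) (h1 : 1 ≤ H0.n) (N : ℕ) : ∃ H' ∈ 𝔥, H'.n = N := by
  refine ⟨blow H0 N (fun v => if v < H0.n then v else 0), ?_, rfl⟩
  refine hH H0 hH0 _ ⟨_, blow_isBlowupMap H0 N _ ?_⟩
  intro v hv
  split_ifs with h
  · exact h
  · omega
end Aux6
section MainCase
open Finset

set_option maxHeartbeats 2000000 in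
lemma main_case {r : ℕ} (𝔉 𝔥 : Set (RGraph r)) (hF : Clonable 𝔉) (hH : Clonable 𝔥)
    (ε0 : ℝ) (hε0 : 0 < ε0) (α0 : ℝ) (hα0 : 0 < α0) (n0 : ℕ)
    (hstab : ∀ F ∈ 𝔉, n0 ≤ F.n → distFam 𝔥 F ≤ ε0 * (F.n : ℝ) ^ r →
      (F.edges.card : ℝ) ≤ (mFam 𝔥 F.n : ℝ) - α0 * distFam 𝔥 F)
    (F : RGraph r) (hF𝔉 : F ∈ 𝔉) (μ : ℕ → ℝ) (hμ : IsWeight F μ)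
    (hdist : wDistFam 𝔥 F μ ≤ ε0 / 2)
    (hmain : ∃ H0 ∈ 𝔥, ∃ ν0 : ℕ → ℝ, IsWeight H0 ν0) :
    lamW F μ ≤ lamFam 𝔥 - α0 * wDistFam 𝔥 F μ := by
  classical
  obtain ⟨H0, hH0m, ν0, hν0⟩ := hmain
  set d := wDistFam 𝔥 F μ with hd
  have hd0 : 0 ≤ d := wDistFam_nonneg 𝔥 F μ
  have hlam0 : 0 ≤ lamFam 𝔥 := le_trans (lamW_nonneg hν0.1) (lamW_le_lamFam hH0m hν0)
  have hlam3 : lamFam 𝔥 ≤ 3 := csSup_le ⟨lamW H0 ν0, H0, hH0m, ν0, hν0, rfl⟩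
    (by rintro x ⟨H, -, ν, hν, rfl⟩; exact lamW_le_three hν)
  have hH0n : 1 ≤ H0.n := isWeight_pos hν0
  have key : ∀ γ : ℝ, 0 < γ → lamW F μ + α0 * d ≤ lamFam 𝔥 + γ := by
    intro γ hγ
    set δ1 := ε0 / 8 with hδ1
    have hδ1pos : 0 < δ1 := by rw [hδ1]; positivity
    -- extract weighted-distance witnesses
    have hTne : {x : ℝ | ∃ H ∈ 𝔥, ∃ ν, IsWeight H ν ∧ x = wDist F μ H ν}.Nonempty :=
      ⟨wDist F μ H0 ν0, H0, hH0m, ν0, hν0, rfl⟩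
    obtain ⟨t, ht_mem, ht_lt⟩ := Real.lt_sInf_add_pos hTne hδ1pos
    obtain ⟨H, hHm, ν, hν, rfl⟩ := ht_mem
    have hsT : sInf {x : ℝ | ∃ H ∈ 𝔥, ∃ ν, IsWeight H ν ∧ x = wDist F μ H ν} = d := rfl
    rw [hsT] at ht_lt
    obtain ⟨Ga, Gb, wab, hnab, hwa, hwb⟩ := exists_common_blowup hμ hν
    have hUne : {x : ℝ | ∃ (G1 G2 : RGraph r) (w : ℕ → ℝ), G1.n = G2.n ∧
        WIsBlowup F μ G1 w ∧ WIsBlowup H ν G2 w ∧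
        x = dPrime G1.edges G2.edges w}.Nonempty :=
      ⟨_, Ga, Gb, wab, hnab, hwa, hwb, rfl⟩
    obtain ⟨u, hu_mem, hu_lt⟩ := Real.lt_sInf_add_pos hUne hδ1pos
    obtain ⟨G1, G2, w, hn12, hw1, hw2, rfl⟩ := hu_mem
    have hsU : sInf {x : ℝ | ∃ (G1 G2 : RGraph r) (w : ℕ → ℝ), G1.n = G2.n ∧
        WIsBlowup F μ G1 w ∧ WIsBlowup H ν G2 w ∧
        x = dPrime G1.edges G2.edges w} = wDist F μ H ν := rfl
    rw [hsU] at hu_lt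
    have hdP_lt : dPrime G1.edges G2.edges w < d + 2 * δ1 := by linarith
    have hwW : IsWeight G1 w := hw1.1
    obtain ⟨-, φ1, hb1, hfib1⟩ := hw1
    obtain ⟨hwW2, φ2, hb2, hfib2⟩ := hw2
    set m := G1.n with hm
    have hm1 : 1 ≤ m := isWeight_pos hwW
    have hw0 : ∀ v, 0 ≤ w v := hwW.1
    have hwle1 : ∀ v, w v ≤ 1 := fun v => isWeight_le_one hwW
    have hwsum : ∑ v ∈ Finset.range m, w v = 1 := hwW.2.2
    -- the symmetric difference graph D
    have hDu : ∀ e ∈ symmDiff G1.edges G2.edges, e.card = r := by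
      intro e he
      rcases Finset.mem_symmDiff.1 he with ⟨h1, -⟩ | ⟨h1, -⟩
      · exact G1.uniform e h1
      · exact G2.uniform e h1
    have hDv : ∀ e ∈ symmDiff G1.edges G2.edges, ∀ v ∈ e, v < m := by
      intro e he v hv
      rcases Finset.mem_symmDiff.1 he with ⟨h1, -⟩ | ⟨h1, -⟩
      · exact G1.valid e h1 v hv
      · rw [hn12]; exact G2.valid e h1 v hv
    obtain ⟨D, hDn, hDe⟩ : ∃ Dg : RGraph r, Dg.n = m ∧
        Dg.edges = symmDiff G1.edges G2.edges :=
      ⟨⟨m, symmDiff G1.edges G2.edges, hDu, hDv⟩, rfl, rfl⟩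
    have hDcard : (D.edges.card : ℝ) ≤ 2 ^ m := by
      have := edges_card_le (F := D)
      rw [hDn] at this
      exact_mod_cast this
    -- choose n
    obtain ⟨n, hnR⟩ := exists_nat_ge (max (max (n0 : ℝ) (m : ℝ))
      (max (4 * (2 ^ m * r * ((m : ℝ) + 1)) / ε0) (3 * 2 ^ r * (m : ℝ) / γ)))
    have hn_n0 : (n0 : ℝ) ≤ n := le_trans (le_trans (le_max_left _ _) (le_max_left _ _)) hnR
    have hn_m : (m : ℝ) ≤ n := le_trans (le_trans (le_max_right _ _) (le_max_left _ _)) hnR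
    have hn_R1 : 4 * (2 ^ m * r * ((m : ℝ) + 1)) / ε0 ≤ n :=
      le_trans (le_trans (le_max_left _ _) (le_max_right _ _)) hnR
    have hn_R2 : 3 * 2 ^ r * (m : ℝ) / γ ≤ n :=
      le_trans (le_trans (le_max_right _ _) (le_max_right _ _)) hnR
    have hm1R : (1 : ℝ) ≤ m := by exact_mod_cast hm1
    have hnpos' : (0 : ℝ) < n := lt_of_lt_of_le (by linarith) hn_m
    have hn1 : 1 ≤ n := by exact_mod_cast le_trans hm1R hn_m
    -- the integer class sizes
    set c : ℕ → ℕ := fun v => ⌊w v * n⌋₊ + 1 with hc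
    set N := ∑ v ∈ Finset.range m, c v with hN
    set ψ := blockMap c m with hψdef
    have hψ : ∀ k < N, ψ k < m := by
      intro k hk
      rw [hψdef]
      exact blockMap_lt c m (by rw [← hN]; exact hk)
    have hc1 : ∀ v, 1 ≤ c v := by
      intro v
      simp only [hc]
      omega
    have hcpos : ∀ v, (0 : ℝ) < (c v : ℝ) := fun v => by exact_mod_cast hc1 v
    have hclb : ∀ v, w v * n ≤ (c v : ℝ) := by
      intro v
      have := Nat.lt_floor_add_one (w v * n)
      rw [hc]
      push_cast
      linarith
    have hcub : ∀ v, (c v : ℝ) ≤ w v * n + 1 := by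
      intro v
      have := Nat.floor_le (mul_nonneg (hw0 v) (Nat.cast_nonneg n))
      rw [hc]
      push_cast
      linarith
    have hNcast : (N : ℝ) = ∑ v ∈ Finset.range m, (c v : ℝ) := by
      rw [hN]
      push_cast
      rfl
    have hNlbn : (n : ℝ) ≤ N := by
      rw [hNcast]
      calc (n : ℝ) = (∑ v ∈ Finset.range m, w v) * n := by rw [hwsum, one_mul]
        _ = ∑ v ∈ Finset.range m, w v * n := Finset.sum_mul _ _ _
        _ ≤ ∑ v ∈ Finset.range m, (c v : ℝ) := Finset.sum_le_sum fun v _ => hclb v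
    have hNubnm : (N : ℝ) ≤ (n : ℝ) + m := by
      rw [hNcast]
      calc ∑ v ∈ Finset.range m, (c v : ℝ) ≤ ∑ v ∈ Finset.range m, (w v * n + 1) :=
            Finset.sum_le_sum fun v _ => hcub v
        _ = (∑ v ∈ Finset.range m, w v) * n + m := by
            rw [Finset.sum_add_distrib, Finset.sum_const, Finset.card_range, ← Finset.sum_mul]
            push_cast
            ring
        _ = (n : ℝ) + m := by rw [hwsum, one_mul]
    have hNpos' : (0 : ℝ) < N := lt_of_lt_of_le hnpos' hNlbn
    have hN_n : n ≤ N := by exact_mod_cast hNlbn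
    have hN1 : 1 ≤ N := le_trans hn1 hN_n
    have hN_n0 : n0 ≤ N := le_trans (by exact_mod_cast hn_n0) hN_n
    -- the blowups
    set G1' := blow F N (fun k => φ1 (ψ k)) with hG1'
    have hφ1' : ∀ k < N, φ1 (ψ k) < F.n := fun k hk => hb1.1 _ (hψ k hk)
    have hb1'F : IsBlowupMap F G1' (fun k => φ1 (ψ k)) := blow_isBlowupMap F N _ hφ1'
    have hb1' : IsBlowupMap G1 G1' ψ := isBlowupMap_comp N ψ hb1 hψ
    have hG1'𝔉 : G1' ∈ 𝔉 := hF F hF𝔉 G1' ⟨_, hb1'F⟩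
    set G2' := blow H N (fun k => φ2 (ψ k)) with hG2'
    have hψ2 : ∀ k < N, ψ k < G2.n := fun k hk => by rw [← hn12]; exact hψ k hk
    have hφ2' : ∀ k < N, φ2 (ψ k) < H.n := fun k hk => hb2.1 _ (hψ2 k hk)
    have hb2'H : IsBlowupMap H G2' (fun k => φ2 (ψ k)) := blow_isBlowupMap H N _ hφ2'
    have hb2' : IsBlowupMap G2 G2' ψ := isBlowupMap_comp N ψ hb2 hψ2
    have hG2'𝔥 : G2' ∈ 𝔥 := hH H hHm G2' ⟨_, hb2'H⟩
    have hG1'n : G1'.n = N := rfl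
    have hG2'n : G2'.n = N := rfl
    have hfibcard : ∀ i, i < m →
        ((Finset.range N).filter (fun k => ψ k = i)).card = c i := by
      intro i hi
      rw [hN, hψdef]
      exact blockMap_fiber_card c m hi
    -- (a) lower bound on the edge count of G1'
    have hcard1 : (G1'.edges.card : ℝ) = ∑ e ∈ G1.edges, ∏ i ∈ e, (c i : ℝ) := by
      rw [card_eq_sum_prod_blowup hb1']
      refine Finset.sum_congr rfl fun e he => Finset.prod_congr rfl fun i hi => ?_
      rw [show G1'.n = N from rfl, hfibcard i (G1.valid e he i hi)]
    have hlamG1 : lamW G1 w = lamW F μ := lamW_of_wIsBlowup ⟨hwW, φ1, hb1, hfib1⟩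
    have hcard_lb : lamW F μ * (n : ℝ) ^ r ≤ (G1'.edges.card : ℝ) := by
      rw [hcard1, ← hlamG1, lamW, Finset.sum_mul]
      apply Finset.sum_le_sum
      intro e he
      have hcr := G1.uniform e he
      calc (∏ v ∈ e, w v) * (n : ℝ) ^ r = ∏ v ∈ e, (w v * n) := by
            rw [Finset.prod_mul_distrib, Finset.prod_const, hcr]
        _ ≤ ∏ i ∈ e, (c i : ℝ) := Finset.prod_le_prod
            (fun i _ => mul_nonneg (hw0 i) (Nat.cast_nonneg n)) (fun i _ => hclb i)
    -- (b) the weight ρ on N vertices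
    set ρ : ℕ → ℝ := fun k => if k < N then w (ψ k) / (c (ψ k) : ℝ) else 0 with hρ
    have hρ0 : ∀ k, 0 ≤ ρ k := by
      intro k
      rw [hρ]
      dsimp only
      split_ifs
      · exact div_nonneg (hw0 _) (le_of_lt (hcpos _))
      · exact le_rfl
    have hρzero : ∀ v, N ≤ v → ρ v = 0 := by
      intro v hv
      rw [hρ]
      dsimp only
      rw [if_neg (not_lt.2 hv)]
    have hρfibsum : ∀ v, v < m →
        ∑ k ∈ (Finset.range N).filter (fun k => ψ k = v), ρ k = w v := by
      intro v hv
      have hterm : ∀ k ∈ (Finset.range N).filter (fun k => ψ k = v),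
          ρ k = w v / (c v : ℝ) := by
        intro k hk
        obtain ⟨hk1, hk2⟩ := Finset.mem_filter.1 hk
        rw [hρ]
        dsimp only
        rw [if_pos (Finset.mem_range.1 hk1), hk2]
      rw [Finset.sum_congr rfl hterm, Finset.sum_const, hfibcard v hv, nsmul_eq_mul]
      rw [mul_div_cancel₀ _ (ne_of_gt (hcpos v))]
    have hρsum : ∑ k ∈ Finset.range N, ρ k = 1 := by
      rw [← Finset.sum_fiberwise_of_maps_to (g := ψ) (t := Finset.range m)
        (fun k hk => Finset.mem_range.2 (hψ k (Finset.mem_range.1 hk))) ρ]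
      rw [Finset.sum_congr rfl (fun v hv => hρfibsum v (Finset.mem_range.1 hv))]
      exact hwsum
    have hρW : IsWeight G1' ρ := ⟨hρ0, hρzero, hρsum⟩
    have hρfibμ : ∀ i, i < F.n →
        μ i = ∑ k ∈ (Finset.range N).filter (fun k => φ1 (ψ k) = i), ρ k := by
      intro i hi
      rw [sum_filter_comp hψ (fun v => φ1 v = i) ρ]
      rw [Finset.sum_congr rfl (fun v hv =>
        hρfibsum v (Finset.mem_range.1 (Finset.mem_filter.1 hv).1))]
      exact hfib1 i hi
    have hρle : ∀ v, v < N → ρ v ≤ ((n : ℝ))⁻¹ := by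
      intro v hv
      rw [hρ]
      dsimp only
      rw [if_pos hv, inv_eq_one_div, div_le_div_iff₀ (hcpos _) hnpos']
      rw [one_mul]
      exact hclb _
    -- distance lower bound
    have hSne : {x : ℝ | ∃ H' ∈ 𝔥, H'.n = G1'.n ∧
        x = ((symmDiff G1'.edges H'.edges).card : ℝ)}.Nonempty := by
      obtain ⟨H', hH'm, hH'n⟩ := exists_member_size hH hH0m hH0n N
      exact ⟨_, H', hH'm, by rw [hH'n, hG1'n], rfl⟩
    have hdlow : d * (n : ℝ) ^ r ≤ distFam 𝔥 G1' := by
      rw [distFam]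
      apply le_csInf hSne
      rintro x ⟨H', hH'm, hH'n, rfl⟩
      have hH'N : H'.n = N := by rw [hH'n, hG1'n]
      have hρWH' : IsWeight H' ρ :=
        ⟨hρ0, fun v hv => hρzero v (hH'N ▸ hv), by rw [hH'N]; exact hρsum⟩
      have h1 : d ≤ wDist F μ H' ρ := by
        rw [hd, wDistFam]
        apply csInf_le
        · refine ⟨0, ?_⟩
          rintro x ⟨Hx, -, νx, -, rfl⟩
          exact wDist_nonneg F μ Hx νx
        · exact ⟨H', hH'm, ρ, hρWH', rfl⟩
      have h2 : wDist F μ H' ρ ≤ dPrime G1'.edges H'.edges ρ := by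
        rw [wDist]
        apply csInf_le
        · refine ⟨0, ?_⟩
          rintro x ⟨Gx, Gy, νxy, -, hwx, -, rfl⟩
          exact dPrime_nonneg hwx.1.1
        · exact ⟨G1', H', ρ, by rw [hG1'n, hH'N],
            ⟨hρW, fun k => φ1 (ψ k), hb1'F, hρfibμ⟩, wIsBlowup_self hρWH', rfl⟩
      have h3 : dPrime G1'.edges H'.edges ρ
          ≤ ((symmDiff G1'.edges H'.edges).card : ℝ) * ((n : ℝ))⁻¹ ^ r := by
        rw [dPrime]
        calc ∑ e ∈ symmDiff G1'.edges H'.edges, ∏ v ∈ e, ρ v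
            ≤ ∑ _e ∈ symmDiff G1'.edges H'.edges, ((n : ℝ))⁻¹ ^ r := by
              apply Finset.sum_le_sum
              intro e he
              have hcr : e.card = r := by
                rcases Finset.mem_symmDiff.1 he with ⟨h', -⟩ | ⟨h', -⟩
                · exact G1'.uniform e h'
                · exact H'.uniform e h'
              have hval : ∀ v ∈ e, v < N := by
                intro v hv
                rcases Finset.mem_symmDiff.1 he with ⟨h', -⟩ | ⟨h', -⟩
                · exact hG1'n ▸ G1'.valid e h' v hv
                · exact hH'N ▸ H'.valid e h' v hv
              calc ∏ v ∈ e, ρ v ≤ ∏ v ∈ e, ((n : ℝ))⁻¹ :=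
                    Finset.prod_le_prod (fun v _ => hρ0 v)
                      (fun v hv => hρle v (hval v hv))
                _ = ((n : ℝ))⁻¹ ^ r := by rw [Finset.prod_const, hcr]
          _ = ((symmDiff G1'.edges H'.edges).card : ℝ) * ((n : ℝ))⁻¹ ^ r := by
              rw [Finset.sum_const, nsmul_eq_mul]
      have h4 : d ≤ ((symmDiff G1'.edges H'.edges).card : ℝ) * ((n : ℝ))⁻¹ ^ r := by
        linarith
      calc d * (n : ℝ) ^ r
          ≤ ((symmDiff G1'.edges H'.edges).card : ℝ) * ((n : ℝ))⁻¹ ^ r * (n : ℝ) ^ r :=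
            mul_le_mul_of_nonneg_right h4 (by positivity)
        _ = ((symmDiff G1'.edges H'.edges).card : ℝ) := by
            rw [mul_assoc, ← mul_pow, inv_mul_cancel₀ (ne_of_gt hnpos'), one_pow, mul_one]
    -- (c) distance upper bound via G2'
    have hψD : ∀ k < N, ψ k < D.n := by
      intro k hk
      rw [hDn]
      exact hψ k hk
    have hbD : IsBlowupMap D (blow D N ψ) ψ := blow_isBlowupMap D N ψ hψD
    have hΔ : symmDiff G1'.edges G2'.edges = (blow D N ψ).edges := by
      apply Finset.ext
      intro e
      rw [Finset.mem_symmDiff, hb1'.2 e, hb2'.2 e, mem_blow_iff, hDe,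
        Finset.mem_symmDiff, hG1'n, hG2'n]
      constructor
      · rintro (⟨⟨ha, hbi, hc'⟩, hno⟩ | ⟨⟨ha, hbi, hc'⟩, hno⟩)
        · exact ⟨ha, hbi, Or.inl ⟨hc', fun hmem => hno ⟨ha, hbi, hmem⟩⟩⟩
        · exact ⟨ha, hbi, Or.inr ⟨hc', fun hmem => hno ⟨ha, hbi, hmem⟩⟩⟩
      · rintro ⟨ha, hbi, (⟨hc1', hc2'⟩ | ⟨hc1', hc2'⟩)⟩
        · exact Or.inl ⟨⟨ha, hbi, hc1'⟩, fun hmem => hc2' hmem.2.2⟩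
        · exact Or.inr ⟨⟨ha, hbi, hc1'⟩, fun hmem => hc2' hmem.2.2⟩
    have hΔcard : ((symmDiff G1'.edges G2'.edges).card : ℝ)
        = ∑ e ∈ D.edges, ∏ i ∈ e, (c i : ℝ) := by
      rw [hΔ, card_eq_sum_prod_blowup hbD]
      refine Finset.sum_congr rfl fun e he => Finset.prod_congr rfl fun i hi => ?_
      rw [show (blow D N ψ).n = N from rfl,
        hfibcard i (by have := D.valid e he i hi; rwa [hDn] at this)]
    set η : ℝ := ((m : ℝ) + 1) / N with hη
    have hη0 : 0 ≤ η := by rw [hη]; positivity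
    have hedge_ub : ∀ e ∈ D.edges,
        ∏ i ∈ e, (c i : ℝ) ≤ (∏ i ∈ e, w i + r * η) * (N : ℝ) ^ r := by
      intro e he
      have hcr : e.card = r := D.uniform e he
      have hvm : ∀ i ∈ e, i < m := by
        intro i hi
        have := D.valid e he i hi
        rwa [hDn] at this
      have hcN : ∀ i ∈ e, (c i : ℝ) ≤ N := by
        intro i hi
        have h' : c i ≤ N := by
          rw [hN]
          exact Finset.single_le_sum (fun v _ => Nat.zero_le _)
            (Finset.mem_range.2 (hvm i hi))
        exact_mod_cast h'
      have habs : |∏ i ∈ e, ((c i : ℝ) / N) - ∏ i ∈ e, w i| ≤ e.card * η := by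
        apply abs_prod_sub_prod_le e _ _ η hη0
        · intro v hv
          exact ⟨div_nonneg (le_of_lt (hcpos v)) (le_of_lt hNpos'),
            (div_le_one hNpos').2 (hcN v hv)⟩
        · intro v hv
          exact ⟨hw0 v, hwle1 v⟩
        · intro v hv
          have hub : (c v : ℝ) - w v * N ≤ (m : ℝ) + 1 := by
            have h1 := hcub v
            have h2 : w v * n ≤ w v * N := mul_le_mul_of_nonneg_left hNlbn (hw0 v)
            have hm0 : (0 : ℝ) ≤ m := Nat.cast_nonneg m
            linarith
          have hlb : w v * N - (c v : ℝ) ≤ (m : ℝ) + 1 := by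
            have h1 : w v * N ≤ w v * ((n : ℝ) + m) :=
              mul_le_mul_of_nonneg_left hNubnm (hw0 v)
            have h2 : w v * ((n : ℝ) + m) = w v * n + w v * m := by ring
            have h3 : w v * m ≤ 1 * m :=
              mul_le_mul_of_nonneg_right (hwle1 v) (Nat.cast_nonneg m)
            have h4 := hclb v
            linarith
          have heq : (c v : ℝ) / N - w v = ((c v : ℝ) - w v * N) / N := by
            field_simp
          rw [heq, abs_div, abs_of_pos hNpos', hη]
          exact (div_le_div_iff_of_pos_right hNpos').2 (abs_le.2 ⟨by linarith, hub⟩)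
      have hprodc : ∏ i ∈ e, (c i : ℝ) = (∏ i ∈ e, ((c i : ℝ) / N)) * (N : ℝ) ^ r := by
        rw [← hcr, ← Finset.prod_const, ← Finset.prod_mul_distrib]
        refine Finset.prod_congr rfl fun i _ => ?_
        rw [div_mul_cancel₀ _ (ne_of_gt hNpos')]
      rw [hprodc]
      apply mul_le_mul_of_nonneg_right ?_ (by positivity)
      have h' := (abs_le.1 habs).2
      rw [hcr] at h'
      linarith
    have hΔub : ((symmDiff G1'.edges G2'.edges).card : ℝ)
        ≤ (dPrime G1.edges G2.edges w + 2 ^ m * r * η) * (N : ℝ) ^ r := by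
      rw [hΔcard]
      calc ∑ e ∈ D.edges, ∏ i ∈ e, (c i : ℝ)
          ≤ ∑ e ∈ D.edges, (∏ i ∈ e, w i + r * η) * (N : ℝ) ^ r :=
            Finset.sum_le_sum hedge_ub
        _ = (∑ e ∈ D.edges, ∏ i ∈ e, w i + D.edges.card * (r * η)) * (N : ℝ) ^ r := by
            rw [← Finset.sum_mul, Finset.sum_add_distrib, Finset.sum_const, nsmul_eq_mul]
        _ ≤ (dPrime G1.edges G2.edges w + 2 ^ m * r * η) * (N : ℝ) ^ r := by
            apply mul_le_mul_of_nonneg_right ?_ (by positivity)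
            have he1 : ∑ e ∈ D.edges, ∏ i ∈ e, w i = dPrime G1.edges G2.edges w := by
              rw [dPrime, hDe]
            have he2 : (D.edges.card : ℝ) * ((r : ℝ) * η) ≤ 2 ^ m * ((r : ℝ) * η) :=
              mul_le_mul_of_nonneg_right hDcard
                (mul_nonneg (Nat.cast_nonneg r) hη0)
            have he3 : (2:ℝ) ^ m * ((r:ℝ) * η) = 2 ^ m * r * η := by ring
            linarith [he1, he2, he3]
    -- the ε0-check for local stability
    have hE : 2 ^ m * (r : ℝ) * η ≤ ε0 / 4 := by
      have hle1 : η ≤ ((m : ℝ) + 1) / n := by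
        rw [hη]
        apply div_le_div_of_nonneg_left (by positivity) hnpos' hNlbn
      have h4' : 4 * (2 ^ m * r * ((m : ℝ) + 1)) ≤ n * ε0 := by
        rw [div_le_iff₀ hε0] at hn_R1
        linarith
      have h6' : 2 ^ m * (r : ℝ) * η ≤ 2 ^ m * (r : ℝ) * ((((m : ℝ) + 1)) / n) :=
        mul_le_mul_of_nonneg_left hle1 (by positivity)
      have h7' : 2 ^ m * (r : ℝ) * (((m : ℝ) + 1) / n) ≤ ε0 / 4 := by
        have heq : 2 ^ m * (r : ℝ) * (((m : ℝ) + 1) / n) = 2 ^ m * r * ((m : ℝ) + 1) / n := by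
          ring
        rw [heq, div_le_div_iff₀ hnpos' (by norm_num : (0:ℝ) < 4)]
        linarith
      linarith
    have hεcheck : distFam 𝔥 G1' ≤ ε0 * ((G1'.n : ℝ)) ^ r := by
      have hdistub : distFam 𝔥 G1' ≤ ((symmDiff G1'.edges G2'.edges).card : ℝ) := by
        rw [distFam]
        apply csInf_le
        · refine ⟨0, ?_⟩
          rintro x ⟨Hx, -, -, rfl⟩
          positivity
        · exact ⟨G2', hG2'𝔥, by rw [hG2'n, hG1'n], rfl⟩
      have hsum_eps : dPrime G1.edges G2.edges w + 2 ^ m * r * η ≤ ε0 := by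
        have hd_half : d ≤ ε0 / 2 := hdist
        have : (2:ℝ) * δ1 = ε0 / 4 := by rw [hδ1]; ring
        linarith [hdP_lt, hE]
      calc distFam 𝔥 G1' ≤ ((symmDiff G1'.edges G2'.edges).card : ℝ) := hdistub
        _ ≤ (dPrime G1.edges G2.edges w + 2 ^ m * r * η) * (N : ℝ) ^ r := hΔub
        _ ≤ ε0 * (N : ℝ) ^ r := mul_le_mul_of_nonneg_right hsum_eps (by positivity)
        _ = ε0 * ((G1'.n : ℝ)) ^ r := by rw [hG1'n]
    -- apply local stability
    have hstabG := hstab G1' hG1'𝔉 (le_trans hN_n0 (le_of_eq hG1'n.symm)) hεcheck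
    have hmFamle : (mFam 𝔥 N : ℝ) ≤ lamFam 𝔥 * (N : ℝ) ^ r := mFam_le hN1 hlam0
    have hchain : (lamW F μ + α0 * d) * (n : ℝ) ^ r ≤ lamFam 𝔥 * (N : ℝ) ^ r := by
      have hα0d : α0 * (d * (n : ℝ) ^ r) ≤ α0 * distFam 𝔥 G1' :=
        mul_le_mul_of_nonneg_left hdlow (le_of_lt hα0)
      have hGn : (mFam 𝔥 G1'.n : ℝ) = (mFam 𝔥 N : ℝ) := by rw [hG1'n]
      rw [hGn] at hstabG
      have hexp : (lamW F μ + α0 * d) * (n : ℝ) ^ r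
          = lamW F μ * (n : ℝ) ^ r + α0 * (d * (n : ℝ) ^ r) := by ring
      rw [hexp]
      linarith
    -- convert to the final bound
    have hNr_ub : (N : ℝ) ^ r ≤ (n : ℝ) ^ r * (1 + 2 ^ r * ((m : ℝ) / n)) := by
      have h1 : (N : ℝ) ^ r ≤ ((n : ℝ) + m) ^ r :=
        pow_le_pow_left₀ (le_of_lt hNpos') hNubnm r
      have h2 : ((n : ℝ) + m) = (n : ℝ) * (1 + (m : ℝ) / n) := by
        field_simp
      have hx0 : 0 ≤ (m : ℝ) / n := by positivity
      have hx1 : (m : ℝ) / n ≤ 1 := (div_le_one hnpos').2 hn_m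
      have h3 : (1 + (m : ℝ) / n) ^ r ≤ 1 + ((2 : ℝ) ^ r - 1) * ((m : ℝ) / n) :=
        one_add_pow_le hx0 hx1 r
      have h4 : 1 + ((2 : ℝ) ^ r - 1) * ((m : ℝ) / n) ≤ 1 + 2 ^ r * ((m : ℝ) / n) := by
        have := mul_le_mul_of_nonneg_right
          (by linarith : ((2 : ℝ) ^ r - 1) ≤ 2 ^ r) hx0
        linarith
      calc (N : ℝ) ^ r ≤ ((n : ℝ) + m) ^ r := h1
        _ = (n : ℝ) ^ r * (1 + (m : ℝ) / n) ^ r := by rw [h2, mul_pow]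
        _ ≤ (n : ℝ) ^ r * (1 + 2 ^ r * ((m : ℝ) / n)) := by
            apply mul_le_mul_of_nonneg_left (le_trans h3 h4) (by positivity)
    have hnr_pos : (0 : ℝ) < (n : ℝ) ^ r := pow_pos hnpos' r
    have hc2 : lamW F μ + α0 * d ≤ lamFam 𝔥 * (1 + 2 ^ r * ((m : ℝ) / n)) := by
      apply le_of_mul_le_mul_right ?_ hnr_pos
      calc (lamW F μ + α0 * d) * (n : ℝ) ^ r ≤ lamFam 𝔥 * (N : ℝ) ^ r := hchain
        _ ≤ lamFam 𝔥 * ((n : ℝ) ^ r * (1 + 2 ^ r * ((m : ℝ) / n))) :=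
            mul_le_mul_of_nonneg_left hNr_ub hlam0
        _ = lamFam 𝔥 * (1 + 2 ^ r * ((m : ℝ) / n)) * (n : ℝ) ^ r := by ring
    have h4 : 3 * ((2 : ℝ) ^ r * ((m : ℝ) / n)) ≤ γ := by
      rw [div_le_iff₀ hγ] at hn_R2
      have heq : 3 * ((2 : ℝ) ^ r * ((m : ℝ) / n)) = 3 * 2 ^ r * (m : ℝ) / n := by
        ring
      rw [heq, div_le_iff₀ hnpos']
      calc 3 * 2 ^ r * (m : ℝ) ≤ (n : ℝ) * γ := hn_R2
        _ = γ * n := by ring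
    have h5 : lamFam 𝔥 * (2 ^ r * ((m : ℝ) / n)) ≤ 3 * ((2 : ℝ) ^ r * ((m : ℝ) / n)) :=
      mul_le_mul_of_nonneg_right hlam3 (by positivity)
    calc lamW F μ + α0 * d ≤ lamFam 𝔥 * (1 + 2 ^ r * ((m : ℝ) / n)) := hc2
      _ = lamFam 𝔥 + lamFam 𝔥 * (2 ^ r * ((m : ℝ) / n)) := by ring
      _ ≤ lamFam 𝔥 + γ := by linarith
  have hfin := le_of_forall_pos_le_add key
  linarith

end MainCase
/-- If `𝔉` and `𝔥` are clonable and `𝔉` is `𝔥`-locally stable, then `𝔉` is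
`𝔥`-weight locally stable. -/
theorem weightLocallyStable_of_locallyStable {r : ℕ} (𝔉 𝔥 : Set (RGraph r))
    (hF : Clonable 𝔉) (hH : Clonable 𝔥) (h : HLocallyStable 𝔉 𝔥) :
    HWeightLocallyStable 𝔉 𝔥 := by
  classical
  obtain ⟨ε0, hε0, α0, hα0, n0, hstab⟩ := h
  refine ⟨ε0 / 2, by linarith, α0, hα0, ?_⟩
  intro F hF𝔉 μ hμ hdist
  by_cases hmain : ∃ H0 ∈ 𝔥, ∃ ν0 : ℕ → ℝ, IsWeight H0 ν0
  · exact main_case 𝔉 𝔥 hF hH ε0 hε0 α0 hα0 n0 hstab F hF𝔉 μ hμ hdist hmain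
  · -- degenerate case: no member of 𝔥 admits a weight, so all have no vertices
    push_neg at hmain
    have hzero : ∀ H ∈ 𝔥, H.n = 0 := by
      intro H hHm
      by_contra hne
      exact hmain H hHm (uniformW H) (isWeight_uniform (by omega))
    have hlamFam : lamFam 𝔥 = 0 := by
      rw [lamFam]
      have : {x : ℝ | ∃ H ∈ 𝔥, ∃ ν, IsWeight H ν ∧ x = lamW H ν} = ∅ := by
        apply Set.eq_empty_iff_forall_notMem.2
        rintro x ⟨H, hHm, ν, hν, -⟩
        exact hmain H hHm ν hν
      rw [this, Real.sSup_empty]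
    have hwd : wDistFam 𝔥 F μ = 0 := by
      rw [wDistFam]
      have : {x : ℝ | ∃ H ∈ 𝔥, ∃ ν, IsWeight H ν ∧ x = wDist F μ H ν} = ∅ := by
        apply Set.eq_empty_iff_forall_notMem.2
        rintro x ⟨H, hHm, ν, hν, -⟩
        exact hmain H hHm ν hν
      rw [this, Real.sInf_empty]
    rw [hwd, hlamFam]
    have hFn1 : 1 ≤ F.n := isWeight_pos hμ
    -- blow up F to a large graph and apply local stability to conclude F has no edges
    set n1 := max n0 F.n with hn1
    set φ : ℕ → ℕ := fun v => if v < F.n then v else 0 with hφ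
    have hφlt : ∀ v < n1, φ v < F.n := by
      intro v hv
      simp only [hφ]
      split_ifs with h'
      · exact h'
      · omega
    set G : RGraph r := blow F n1 φ with hG
    have hG𝔉 : G ∈ 𝔉 := hF F hF𝔉 G ⟨φ, blow_isBlowupMap F n1 φ hφlt⟩
    have hdistG : distFam 𝔥 G = 0 := by
      rw [distFam]
      have : {x : ℝ | ∃ H' ∈ 𝔥, H'.n = G.n ∧
          x = ((symmDiff G.edges H'.edges).card : ℝ)} = ∅ := by
        apply Set.eq_empty_iff_forall_notMem.2
        rintro x ⟨H', hH'm, hH'n, -⟩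
        have := hzero H' hH'm
        have hGn : G.n = n1 := rfl
        omega
      rw [this, Real.sInf_empty]
    have hmFam : mFam 𝔥 G.n = 0 := by
      rw [mFam]
      have : {k | ∃ F' ∈ 𝔥, F'.n = G.n ∧ F'.edges.card = k} = ∅ := by
        apply Set.eq_empty_iff_forall_notMem.2
        rintro k ⟨H', hH'm, hH'n, -⟩
        have := hzero H' hH'm
        have hGn : G.n = n1 := rfl
        omega
      rw [this]
      simp
    have hcard := hstab G hG𝔉 (le_trans (le_max_left n0 F.n) (le_refl n1)) (by
      rw [hdistG]
      positivity)
    rw [hmFam, hdistG] at hcard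
    norm_num at hcard
    have hGedges : G.edges = ∅ := hcard
    have hFedges : F.edges = ∅ := by
      rw [Finset.eq_empty_iff_forall_notMem]
      intro e he
      have hmem : e ∈ G.edges := by
        rw [hG, mem_blow_iff]
        have hsub : ∀ v ∈ e, v < F.n := fun v hv => F.valid e he v hv
        have himg : e.image φ = e := by
          rw [show Finset.image φ e = Finset.image id e from
            Finset.image_congr (fun v hv => by
              simp only [hφ, if_pos (hsub v hv), id]), Finset.image_id]
        refine ⟨fun v hv => lt_of_lt_of_le (hsub v hv) (le_max_right n0 F.n), ?_, ?_⟩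
        · intro a ha b hb hab
          simp only [hφ, if_pos (hsub a ha), if_pos (hsub b hb)] at hab
          exact hab
        · rw [himg]; exact he
      rw [hGedges] at hmem
      exact absurd hmem (Finset.notMem_empty e)
    rw [lamW, hFedges]
    simp

end TuranGT
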